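/- Fix orthonormal vectors u, v ∈ ℝ^d, an integer R ≥ 2, distinct scalars 0 < μ_1 < … < μ_R, and set m_t := μ_t·u. Let [m] be partitioned into nonempty clusters S_1,…,S_R, let a ∈ ℝ^m be a probability vector with a_i > 0, and suppose for every i ∈ S_t one has x_i = m_t + ξ_i·u with |ξ_i| ≤ ρ for some ρ > 0. For ε > 0 let y_{t,+} = m_t + ε·v and y_{t,−} = m_t − ε·v. Define the coupling P* ∈ ℝ^{m×2R} by P*_{i,(t,+)} = P*_{i,(t,−)} = a_i/2 for i ∈ S_t and all other entries 0, and let A(P*) := Y (P*)ᵀ diag(a)^{−1/2} − X diag(a)^{1/2}, where X, Y have the source and target points as columns. Then: (i) for every i ∈ S_t, the barycentric projection satisfies (1/a_i)∑_{(s,σ)} P*_{i,(s,σ)} y_{s,σ} = m_t; (ii) A(P*) = u γᵀ where γ ∈ ℝ^m has entries γ_i = −ξ_i √(a_i); and (iii) ‖A(P*)‖_{S1} = ‖γ‖₂ and A(P*) has rank at most 1. -/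

import Mathlib

open Matrix BigOperators

/-- The nuclear (Schatten-1) norm of a real matrix. -/
noncomputable def nuclearNorm {m n : Type*} [Fintype m] [Fintype n] [DecidableEq n]
    (M : Matrix m n ℝ) : ℝ :=
  (let hA := (Matrix.posSemidef_conjTranspose_mul_self M).isHermitian
   ((hA.eigenvectorUnitary : Matrix n n ℝ) * Matrix.diagonal ((√·) ∘ hA.eigenvalues) *
     (star hA.eigenvectorUnitary : Matrix n n ℝ))).trace

section
open scoped MatrixOrder

lemma nuclearNorm_eq_trace_of_sq {m n : Type*} [Fintype m] [Fintype n] [DecidableEq n]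
    (M : Matrix m n ℝ) (N : Matrix n n ℝ) (hN : N.PosSemidef) (hsq : N ^ 2 = Mᴴ * M) :
    nuclearNorm M = N.trace := by
  have hA := Matrix.posSemidef_conjTranspose_mul_self M
  have h1 : CFC.sqrt (Mᴴ * M) = N := CFC.sqrt_unique (by rw [← sq]; exact hsq) hN.nonneg
  rw [CFC.sqrt_eq_cfc, cfc_nnreal_eq_real _ _, hA.isHermitian.cfc_eq, IsHermitian.cfc,
    Unitary.conjStarAlgAut_apply] at h1
  have hf : ∀ g : n → ℝ, (RCLike.ofReal ∘ (fun x : ℝ => ((NNReal.sqrt x.toNNReal : NNReal) : ℝ))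
      ∘ g) = (fun x : ℝ => √x) ∘ g := by
    intro g; funext x; simp only [Function.comp_apply]; rw [Real.sqrt.eq_1]; rfl
  rw [hf] at h1
  rw [nuclearNorm, ← h1]

end

/-- The equal-split coupling for symmetric two-target clusters has barycentric projection
`m_t` on each cluster, rank-one weighted displacement matrix `u γᵀ`, and
`‖A(P*)‖_{S1} = ‖γ‖₂`. -/
theorem equal_split_coupling_rank_one_displacement
    {d m R : ℕ} (hR : 2 ≤ R)
    (u v : EuclideanSpace ℝ (Fin d)) (hu : ‖u‖ = 1) (hv : ‖v‖ = 1)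
    (huv : inner ℝ u v = (0 : ℝ))
    (μ : Fin R → ℝ) (hμ0 : ∀ t, 0 < μ t) (hμmono : StrictMono μ)
    (S : Fin R → Finset (Fin m))
    (hSdisj : ∀ s t, s ≠ t → Disjoint (S s) (S t))
    (hScover : ∀ i, ∃ t, i ∈ S t) (hSne : ∀ t, (S t).Nonempty)
    (a : Fin m → ℝ) (ha : ∀ i, 0 < a i) (hasum : ∑ i, a i = 1)
    (ρ : ℝ) (hρ : 0 < ρ)
    (x : Fin m → EuclideanSpace ℝ (Fin d)) (ξ : Fin m → ℝ) (hξ : ∀ i, |ξ i| ≤ ρ)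
    (hx : ∀ t, ∀ i ∈ S t, x i = μ t • u + ξ i • u)
    (ε : ℝ) (hε : 0 < ε)
    (y : Fin R × Bool → EuclideanSpace ℝ (Fin d))
    (hy : ∀ t σ, y (t, σ) = μ t • u + (if σ then ε else -ε) • v)
    -- the equal-split coupling P*
    (Pstar : Matrix (Fin m) (Fin R × Bool) ℝ)
    (hPin : ∀ t σ, ∀ i ∈ S t, Pstar i (t, σ) = a i / 2)
    (hPout : ∀ i t σ, i ∉ S t → Pstar i (t, σ) = 0)
    -- the matrices X, Y of source and target points and the weighted displacement map A
    (X : Matrix (Fin d) (Fin m) ℝ) (hX : ∀ k i, X k i = x i k)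
    (Y : Matrix (Fin d) (Fin R × Bool) ℝ) (hY : ∀ k p, Y k p = y p k)
    (APstar : Matrix (Fin d) (Fin m) ℝ)
    (hAPstar : APstar = Y * Pstarᵀ * Matrix.diagonal (fun i => (Real.sqrt (a i))⁻¹)
        - X * Matrix.diagonal (fun i => Real.sqrt (a i)))
    (γ : EuclideanSpace ℝ (Fin m)) (hγ : ∀ i, γ i = -(ξ i) * Real.sqrt (a i)) :
    (∀ t, ∀ i ∈ S t, (a i)⁻¹ • ∑ p : Fin R × Bool, Pstar i p • y p = μ t • u) ∧
    APstar = Matrix.of (fun k i => u k * γ i) ∧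
    nuclearNorm APstar = ‖γ‖ ∧
    APstar.rank ≤ 1 := by
  -- vector-valued key computation
  have hkey : ∀ t, ∀ i ∈ S t,
      (∑ p : Fin R × Bool, Pstar i p • y p) = (a i * μ t) • u := by
    intro t i hi
    rw [Fintype.sum_prod_type]
    have hone : ∀ s : Fin R, (∑ σ : Bool, Pstar i (s, σ) • y (s, σ))
        = if s = t then (a i * μ t) • u else 0 := by
      intro s
      by_cases hst : s = t
      · subst hst
        rw [if_pos rfl, Fintype.sum_bool, hPin s true i hi, hPin s false i hi,
          hy s true, hy s false]
        simp only [if_pos, if_neg, Bool.false_eq_true, not_false_iff, ite_true, ite_false]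
        module
      · have hnot : i ∉ S s := fun h => Finset.disjoint_left.mp (hSdisj s t hst) h hi
        rw [if_neg hst, Fintype.sum_bool, hPout i s true hnot, hPout i s false hnot]
        simp
    rw [Finset.sum_congr rfl (fun s _ => hone s)]
    simp
  -- part (i)
  have part1 : ∀ t, ∀ i ∈ S t, (a i)⁻¹ • ∑ p : Fin R × Bool, Pstar i p • y p = μ t • u := by
    intro t i hi
    rw [hkey t i hi, smul_smul, ← mul_assoc, inv_mul_cancel₀ (ha i).ne', one_mul]
  -- scalar key computation
  have hkeyk : ∀ t, ∀ i ∈ S t, ∀ k, (∑ p : Fin R × Bool, Pstar i p * y p k)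
      = a i * μ t * u k := by
    intro t i hi k
    have h := congrArg (fun w => w k) (hkey t i hi)
    simp only [WithLp.ofLp_sum, Finset.sum_apply] at h
    simpa using h
  -- part (ii)
  have part2 : APstar = Matrix.of (fun k i => u k * γ i) := by
    rw [hAPstar]
    ext k i
    obtain ⟨t, hit⟩ := hScover i
    have hYP : (Y * Pstarᵀ) k i = a i * μ t * u k := by
      rw [mul_apply]
      rw [← hkeyk t i hit k]
      refine Finset.sum_congr rfl fun p _ => ?_
      rw [hY, transpose_apply]
      ring
    have hxk : x i k = (μ t + ξ i) * u k := by
      have := congrArg (fun w => w k) (hx t i hit)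
      simpa [add_mul] using this
    rw [Matrix.sub_apply, Matrix.mul_diagonal, Matrix.mul_diagonal, hYP, hX, hxk, of_apply,
      hγ i]
    have hc : (0:ℝ) < Real.sqrt (a i) := Real.sqrt_pos.mpr (ha i)
    have hc2 : Real.sqrt (a i) * Real.sqrt (a i) = a i := Real.mul_self_sqrt (ha i).le
    rw [← hc2]
    field_simp
    rw [Real.sqrt_sq hc.le]
    ring
  -- sum of squares facts
  have hsumu : ∑ k, u k * u k = 1 := by
    have h := real_inner_self_eq_norm_sq u
    simp only [PiLp.inner_apply, RCLike.inner_apply, starRingEnd_apply, star_trivial, hu,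
      one_pow] at h
    simpa using h
  have hsumγ : ∑ i, γ i * γ i = ‖γ‖ ^ 2 := by
    have h := real_inner_self_eq_norm_sq γ
    rw [← h, PiLp.inner_apply]
    simp [sq]
  -- the Gram matrix
  have hGram : APstarᴴ * APstar = Matrix.of (fun i j : Fin m => γ i * γ j) := by
    ext i j
    rw [part2, mul_apply]
    simp only [conjTranspose_apply, of_apply, star_trivial]
    calc ∑ k, u k * γ i * (u k * γ j) = (∑ k, u k * u k) * (γ i * γ j) := by
          rw [Finset.sum_mul]; exact Finset.sum_congr rfl fun k _ => by ring
      _ = γ i * γ j := by rw [hsumu, one_mul]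
  -- nuclear norm
  have part3 : nuclearNorm APstar = ‖γ‖ := by
    by_cases hγ0 : γ = 0
    · have hA0 : APstar = 0 := by
        rw [part2]
        ext k i
        have : γ i = 0 := by rw [hγ0]; rfl
        simp [this]
      have hsq : (0 : Matrix (Fin m) (Fin m) ℝ) ^ 2 = APstarᴴ * APstar := by
        rw [hA0]; simp
      have := nuclearNorm_eq_trace_of_sq APstar 0 (Matrix.PosSemidef.zero (n := Fin m) (R := ℝ))
        hsq
      rw [this, hγ0]
      simp
    · have hn : (0:ℝ) < ‖γ‖ := norm_pos_iff.mpr hγ0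
      set c : ℝ := ‖γ‖⁻¹ with hc
      set N : Matrix (Fin m) (Fin m) ℝ := Matrix.of (fun i j => c * (γ i * γ j)) with hN
      -- N is PSD
      have hNpsd : N.PosSemidef := by
        have : N = (Matrix.replicateRow Unit (fun i => Real.sqrt c * γ i))ᴴ *
            (Matrix.replicateRow Unit (fun i => Real.sqrt c * γ i)) := by
          ext i j
          rw [mul_apply]
          simp only [conjTranspose_apply, Matrix.replicateRow_apply, star_trivial, hN, of_apply,
            Finset.univ_unique, Finset.sum_singleton]
          have hcc := Real.mul_self_sqrt (le_of_lt (by positivity : (0:ℝ) < c))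
          rw [show Real.sqrt c * γ i * (Real.sqrt c * γ j)
              = (Real.sqrt c * Real.sqrt c) * (γ i * γ j) by ring, hcc]
        rw [this]
        exact Matrix.posSemidef_conjTranspose_mul_self _
      -- N squared is the Gram matrix
      have hsq : N ^ 2 = APstarᴴ * APstar := by
        rw [hGram, pow_two]
        ext i j
        rw [mul_apply]
        simp only [hN, of_apply]
        calc ∑ l, c * (γ i * γ l) * (c * (γ l * γ j))
            = (c * c) * (∑ l, γ l * γ l) * (γ i * γ j) := by
              rw [Finset.mul_sum, Finset.sum_mul]
              exact Finset.sum_congr rfl fun l _ => by ring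
          _ = γ i * γ j := by
              rw [hsumγ, hc]
              field_simp
      have hNs := nuclearNorm_eq_trace_of_sq APstar N hNpsd
        hsq
      rw [hNs, Matrix.trace]
      simp only [hN, diag_apply, of_apply]
      calc ∑ i, c * (γ i * γ i) = c * ∑ i, γ i * γ i := by rw [Finset.mul_sum]
        _ = ‖γ‖ := by rw [hsumγ, hc]; field_simp
  -- rank
  have part4 : APstar.rank ≤ 1 := by
    have : APstar = Matrix.replicateCol Unit u * Matrix.replicateRow Unit γ := by
      rw [part2]
      ext k i
      rw [mul_apply]
      simp [Matrix.replicateCol_apply, Matrix.replicateRow_apply]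
    rw [this]
    calc (Matrix.replicateCol Unit u * Matrix.replicateRow Unit γ).rank
        ≤ (Matrix.replicateCol (Unit) u).rank := Matrix.rank_mul_le_left _ _
      _ ≤ Fintype.card Unit := Matrix.rank_le_card_width _
      _ = 1 := Fintype.card_unit
  exact ⟨part1, part2, part3, part4⟩
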